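/- Let < be a total order on W and define the edge-minimal rooted k-contraction with edges R'_i = {([x]_{b(x)}, [least-(b(x)−1)-representative of y]'s class) | x ∈ maxRepr(W), x R_i y, b(x) > 0}, where the least h-representative of w is the <-least element of {v ∈ maxRepr(W) | v ∼_h w}. Then this contraction is k-bisimilar to the original model M. -/
import Mathlib


/-- A finite pointed Kripke model with modality indices `I` and atoms `P`. -/
structure PModel (I P : Type) where
  W : Type
  fin : Finite W
  R : I → W → W → Prop
  V : P → W → Prop
  d : W

variable {I P : Type}

/-- `h`-bisimilarity between worlds of two models (back-and-forth to depth `h`). -/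
def Bisim (M N : PModel I P) : ℕ → M.W → N.W → Prop
  | 0, w, v => ∀ p, M.V p w ↔ N.V p v
  | h+1, w, v => (∀ p, M.V p w ↔ N.V p v)
      ∧ (∀ i w', M.R i w w' → ∃ v', N.R i v v' ∧ Bisim M N h w' v')
      ∧ (∀ i v', N.R i v v' → ∃ w', M.R i w w' ∧ Bisim M N h w' v')

/-- `k`-bisimilarity of pointed models. -/
def PBisim (k : ℕ) (M N : PModel I P) : Prop := Bisim M N k M.d N.d

/-- Directed paths of length `n`. -/
def Steps (M : PModel I P) : ℕ → M.W → M.W → Prop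
  | 0, w, v => w = v
  | n+1, w, v => ∃ u i, M.R i w u ∧ Steps M n u v

/-- Depth of a world: length of a shortest path from the designated world (`⊤` if none). -/
noncomputable def depth (M : PModel I P) (w : M.W) : ℕ∞ :=
  sInf {n : ℕ∞ | ∃ m : ℕ, n = (m : ℕ∞) ∧ Steps M m M.d w}

/-- Bound `b(w) = k − d(w)`, with `⊥` for unreachable worlds. -/
noncomputable def bound (k : ℕ) (M : PModel I P) (w : M.W) : WithBot ℤ :=
  ENat.recTopCoe (⊥ : WithBot ℤ) (fun n : ℕ => (((k : ℤ) - n : ℤ) : WithBot ℤ)) (depth M w)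

/-- The bound as a natural number (meaningful when `0 ≤ bound k M w`). -/
noncomputable def nbound (k : ℕ) (M : PModel I P) (w : M.W) : ℕ :=
  k - (depth M w).toNat
/-- `x` represents `y` : `b(x) ≥ b(y) ≥ 0` and `x ∼_{b(y)} y`. -/
noncomputable def Repr' (k : ℕ) (M : PModel I P) (x y : M.W) : Prop :=
  0 ≤ bound k M y ∧ bound k M y ≤ bound k M x ∧ Bisim M M (nbound k M y) x y

/-- `x` strictly represents `y`. -/
noncomputable def SRepr (k : ℕ) (M : PModel I P) (x y : M.W) : Prop :=
  Repr' k M x y ∧ bound k M y < bound k M x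

/-- Maximal representatives. -/
noncomputable def maxRepr (k : ℕ) (M : PModel I P) : Set M.W :=
  {x | 0 ≤ bound k M x ∧ ∀ y, ¬ SRepr k M y x}

/-- Representative class `[x]_{b(x)}`. -/
noncomputable def reprClass (k : ℕ) (M : PModel I P) (x : M.W) : Set M.W :=
  {y | Bisim M M (nbound k M x) x y}

lemma depth_d (M : PModel I P) : depth M M.d = 0 := by
  have h0 : (0 : ℕ∞) ∈ {n : ℕ∞ | ∃ m : ℕ, n = (m : ℕ∞) ∧ Steps M m M.d M.d} :=
    ⟨0, by simp, rfl⟩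
  have := sInf_le h0
  simpa [depth, le_zero_iff] using this

lemma bound_d (k : ℕ) (M : PModel I P) : bound k M M.d = ((k : ℤ) : WithBot ℤ) := by
  have h := depth_d M
  simp only [bound, h, ENat.recTopCoe_zero]
  norm_num

lemma bound_le (k : ℕ) (M : PModel I P) (w : M.W) : bound k M w ≤ ((k : ℤ) : WithBot ℤ) := by
  simp only [bound]
  by_cases hd : depth M w = ⊤
  · simp [hd]
  · lift depth M w to ℕ using hd with n hn
    simp only [ENat.recTopCoe_coe]
    exact_mod_cast (by omega : (k : ℤ) - n ≤ (k:ℤ))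

lemma d_mem_maxRepr (k : ℕ) (M : PModel I P) : M.d ∈ maxRepr k M := by
  constructor
  · rw [bound_d]; exact_mod_cast Int.ofNat_nonneg k
  · rintro y ⟨_, hlt⟩
    exact absurd (lt_of_lt_of_le hlt (bound_le k M y)) (by rw [bound_d]; exact lt_irrefl _)

/-- Carrier of the rooted k-contraction: representative classes of maximal representatives. -/
def ContrW (k : ℕ) (M : PModel I P) : Type :=
  {S : Set M.W // ∃ x ∈ maxRepr k M, S = reprClass k M x}

instance (k : ℕ) (M : PModel I P) : Finite (ContrW k M) := by
  have := M.fin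
  exact Subtype.finite

/-- The rooted `k`-contraction. -/
noncomputable def rootedContraction (k : ℕ) (M : PModel I P) : PModel I P where
  W := ContrW k M
  fin := inferInstance
  R := fun i S T => ∃ x ∈ maxRepr k M, ∃ y ∈ maxRepr k M,
        S.1 = reprClass k M x ∧ T.1 = reprClass k M y ∧
        0 < bound k M x ∧ ∃ z, M.R i x z ∧ Bisim M M (nbound k M x - 1) y z
  V := fun p S => ∃ x ∈ maxRepr k M, S.1 = reprClass k M x ∧ M.V p x
  d := ⟨reprClass k M M.d, M.d, d_mem_maxRepr k M, rfl⟩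

/-- The edge-minimal rooted `k`-contraction with respect to a total order `r` on worlds:
edges go to the class of the `<`-least maximal representative `(b(x)-1)`-bisimilar to the
successor. -/
noncomputable def minContraction (k : ℕ) (M : PModel I P) (r : LinearOrder M.W) :
    PModel I P where
  W := ContrW k M
  fin := inferInstance
  R := fun i S T => ∃ x ∈ maxRepr k M, ∃ y : M.W, M.R i x y ∧ 0 < bound k M x ∧
        S.1 = reprClass k M x ∧
        ∃ y' ∈ maxRepr k M,
          (Bisim M M (nbound k M x - 1) y' y ∧
            ∀ v ∈ maxRepr k M, Bisim M M (nbound k M x - 1) v y → r.le y' v) ∧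
          T.1 = reprClass k M y'
  V := fun p S => ∃ x ∈ maxRepr k M, S.1 = reprClass k M x ∧ M.V p x
  d := ⟨reprClass k M M.d, M.d, d_mem_maxRepr k M, rfl⟩

/-! ### Auxiliary lemmas -/

theorem bisim_refl (M : PModel I P) : ∀ h (w : M.W), Bisim M M h w w := by
  intro h
  induction h with
  | zero => intro w p; exact Iff.rfl
  | succ h ih =>
    intro w
    exact ⟨fun p => Iff.rfl,
      fun i w' hr => ⟨w', hr, ih w'⟩,
      fun i v' hr => ⟨v', hr, ih v'⟩⟩

theorem bisim_symm {M N : PModel I P} :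
    ∀ {h} {w : M.W} {v : N.W}, Bisim M N h w v → Bisim N M h v w := by
  intro h
  induction h with
  | zero => intro w v hb p; exact (hb p).symm
  | succ h ih =>
    rintro w v ⟨ha, hf, hbk⟩
    refine ⟨fun p => (ha p).symm, ?_, ?_⟩
    · intro i v' hr
      obtain ⟨w', hw', hb'⟩ := hbk i v' hr
      exact ⟨w', hw', ih hb'⟩
    · intro i w' hr
      obtain ⟨v', hv', hb'⟩ := hf i w' hr
      exact ⟨v', hv', ih hb'⟩

theorem bisim_trans {M N O : PModel I P} :
    ∀ {h} {w : M.W} {v : N.W} {u : O.W}, Bisim M N h w v → Bisim N O h v u →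
      Bisim M O h w u := by
  intro h
  induction h with
  | zero => intro w v u h1 h2 p; exact (h1 p).trans (h2 p)
  | succ h ih =>
    rintro w v u ⟨ha1, hf1, hb1⟩ ⟨ha2, hf2, hb2⟩
    refine ⟨fun p => (ha1 p).trans (ha2 p), ?_, ?_⟩
    · intro i w' hr
      obtain ⟨v', hv', hbv⟩ := hf1 i w' hr
      obtain ⟨u', hu', hbu⟩ := hf2 i v' hv'
      exact ⟨u', hu', ih hbv hbu⟩
    · intro i u' hr
      obtain ⟨v', hv', hbv⟩ := hb2 i u' hr
      obtain ⟨w', hw', hbw⟩ := hb1 i v' hv'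
      exact ⟨w', hw', ih hbw hbv⟩

theorem bisim_step {M N : PModel I P} :
    ∀ {h} {w : M.W} {v : N.W}, Bisim M N (h+1) w v → Bisim M N h w v := by
  intro h
  induction h with
  | zero => rintro w v ⟨ha, _, _⟩ p; exact ha p
  | succ h ih =>
    rintro w v ⟨ha, hf, hb⟩
    refine ⟨ha, ?_, ?_⟩
    · intro i w' hr
      obtain ⟨v', hv', hb'⟩ := hf i w' hr
      exact ⟨v', hv', ih hb'⟩
    · intro i v' hr
      obtain ⟨w', hw', hb'⟩ := hb i v' hr
      exact ⟨w', hw', ih hb'⟩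

theorem bisim_mono {M N : PModel I P} {h' h : ℕ} (hle : h' ≤ h) {w : M.W} {v : N.W}
    (hb : Bisim M N h w v) : Bisim M N h' w v := by
  induction h, hle using Nat.le_induction with
  | base => exact hb
  | succ n hn ih => exact ih (bisim_step hb)

theorem bisim_atoms {M N : PModel I P} {h : ℕ} {w : M.W} {v : N.W}
    (hb : Bisim M N h w v) (p : P) : M.V p w ↔ N.V p v := by
  cases h with
  | zero => exact hb p
  | succ h => exact hb.1 p

theorem steps_snoc {M : PModel I P} {i : I} {x z : M.W} :
    ∀ {m} {w : M.W}, Steps M m w x → M.R i x z → Steps M (m+1) w z := by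
  intro m
  induction m with
  | zero => rintro w rfl hr; exact ⟨z, i, hr, rfl⟩
  | succ m ih =>
    rintro w ⟨u, j, hu, hs⟩ hr
    exact ⟨u, j, hu, ih hs hr⟩

theorem depth_le_of_steps {M : PModel I P} {m : ℕ} {w : M.W} (h : Steps M m M.d w) :
    depth M w ≤ (m : ℕ∞) :=
  sInf_le ⟨m, rfl, h⟩

theorem depth_succ_le {M : PModel I P} {i : I} {x z : M.W} {n : ℕ}
    (hx : depth M x = (n : ℕ∞)) (hr : M.R i x z) : depth M z ≤ ((n+1 : ℕ) : ℕ∞) := by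
  have hlt : depth M x < ((n+1 : ℕ) : ℕ∞) := by
    rw [hx]; exact_mod_cast Nat.lt_succ_self n
  rw [depth] at hlt
  rw [sInf_lt_iff] at hlt
  obtain ⟨a, ⟨m, rfl, hs⟩, hm⟩ := hlt
  have hmn : m ≤ n := by exact_mod_cast Nat.lt_succ_iff.mp (by exact_mod_cast hm)
  calc depth M z ≤ ((m+1 : ℕ) : ℕ∞) := depth_le_of_steps (steps_snoc hs hr)
    _ ≤ ((n+1 : ℕ) : ℕ∞) := by exact_mod_cast Nat.succ_le_succ hmn

theorem bound_eq_of_depth {k : ℕ} {M : PModel I P} {w : M.W} {n : ℕ}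
    (h : depth M w = (n : ℕ∞)) : bound k M w = (((k : ℤ) - n : ℤ) : WithBot ℤ) := by
  simp [bound, h]

theorem nbound_eq_of_depth {k : ℕ} {M : PModel I P} {w : M.W} {n : ℕ}
    (h : depth M w = (n : ℕ∞)) : nbound k M w = k - n := by
  simp [nbound, h]

theorem exists_nat_depth {k : ℕ} {M : PModel I P} {w : M.W} (h : 0 ≤ bound k M w) :
    ∃ n : ℕ, depth M w = (n : ℕ∞) ∧ n ≤ k := by
  by_cases htop : depth M w = ⊤
  · rw [bound, htop] at h
    simp at h
  · obtain ⟨n, hn⟩ := WithTop.ne_top_iff_exists.mp htop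
    refine ⟨n, hn.symm, ?_⟩
    rw [bound_eq_of_depth hn.symm] at h
    have : (0:ℤ) ≤ (k:ℤ) - n := by exact_mod_cast h
    omega

theorem nbound_mono {k : ℕ} {M : PModel I P} {w v : M.W} (hw : 0 ≤ bound k M w)
    (h : bound k M w ≤ bound k M v) : nbound k M w ≤ nbound k M v := by
  obtain ⟨n, hn, hnk⟩ := exists_nat_depth hw
  obtain ⟨m, hm, hmk⟩ := exists_nat_depth (le_trans hw h)
  rw [bound_eq_of_depth hn, bound_eq_of_depth hm] at h
  have h' : (k:ℤ) - n ≤ (k:ℤ) - m := by exact_mod_cast h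
  rw [nbound_eq_of_depth hn, nbound_eq_of_depth hm]
  omega

theorem bound_lt_of_nbound_lt {k : ℕ} {M : PModel I P} {w v : M.W} (hw : 0 ≤ bound k M w)
    (hv : 0 ≤ bound k M v) (h : nbound k M w < nbound k M v) :
    bound k M w < bound k M v := by
  obtain ⟨n, hn, hnk⟩ := exists_nat_depth hw
  obtain ⟨m, hm, hmk⟩ := exists_nat_depth hv
  rw [nbound_eq_of_depth hn, nbound_eq_of_depth hm] at h
  rw [bound_eq_of_depth hn, bound_eq_of_depth hm]
  exact_mod_cast (by omega : (k:ℤ) - n < (k:ℤ) - m)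

theorem exists_maxRepr {k : ℕ} {M : PModel I P} {w : M.W} (hw : 0 ≤ bound k M w) :
    ∃ x ∈ maxRepr k M, bound k M w ≤ bound k M x ∧ Bisim M M (nbound k M w) x w := by
  classical
  have := M.fin
  set s : Set M.W := {v | bound k M w ≤ bound k M v ∧ Bisim M M (nbound k M w) v w}
    with hs
  have hsfin : s.Finite := Set.toFinite s
  have hsne : s.Nonempty := ⟨w, le_refl _, bisim_refl M _ w⟩
  obtain ⟨x, hxs, hmax⟩ := Set.exists_max_image s (bound k M) hsfin hsne
  refine ⟨x, ⟨le_trans hw hxs.1, ?_⟩, hxs.1, hxs.2⟩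
  rintro y ⟨⟨hx0, hxy, hbis⟩, hlt⟩
  have h1 : nbound k M w ≤ nbound k M x := nbound_mono hw hxs.1
  have h2 : Bisim M M (nbound k M w) y x := bisim_mono h1 hbis
  have h3 : Bisim M M (nbound k M w) y w := bisim_trans h2 hxs.2
  exact absurd (hmax y ⟨le_trans hxs.1 hlt.le, h3⟩) (not_le.mpr hlt)

theorem nbound_ge_claim {k : ℕ} {M : PModel I P} {y₀ z : M.W} {m : ℕ}
    (hy : y₀ ∈ maxRepr k M) (hz : 0 ≤ bound k M z) (hm : m ≤ nbound k M z)
    (hb : Bisim M M m y₀ z) : m ≤ nbound k M y₀ := by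
  by_contra hcon
  push_neg at hcon
  obtain ⟨y', hy', hby', hbis⟩ := exists_maxRepr hz
  have h4 : Bisim M M m y' z := bisim_mono hm hbis
  have h5 : Bisim M M m y' y₀ := bisim_trans h4 (bisim_symm hb)
  have h6 : Bisim M M (nbound k M y₀) y' y₀ := bisim_mono hcon.le h5
  have h7 : nbound k M y₀ < nbound k M y' :=
    lt_of_lt_of_le hcon (le_trans hm (nbound_mono hz hby'))
  have h8 : bound k M y₀ < bound k M y' :=
    bound_lt_of_nbound_lt hy.1 (le_trans hz hby') h7
  exact hy.2 y' ⟨⟨hy.1, h8.le, h6⟩, h8⟩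

theorem bisim_of_reprClass_eq {k : ℕ} {M : PModel I P} {x x' : M.W}
    (h : reprClass k M x = reprClass k M x') : Bisim M M (nbound k M x) x x' := by
  have hx' : x' ∈ reprClass k M x' := bisim_refl M _ x'
  rw [← h] at hx'
  exact hx'

theorem atoms_iff {k : ℕ} {M : PModel I P} (r : LinearOrder M.W) {x w : M.W}
    {S : (minContraction k M r).W} (hx : x ∈ maxRepr k M) (hS : S.1 = reprClass k M x)
    (hat : ∀ p, M.V p x ↔ M.V p w) (p : P) :
    M.V p w ↔ (minContraction k M r).V p S := by
  constructor
  · intro hp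
    exact ⟨x, hx, hS, (hat p).mpr hp⟩
  · rintro ⟨x', hx', hS', hp⟩
    have heq : reprClass k M x = reprClass k M x' := by rw [← hS, hS']
    have hbis := bisim_of_reprClass_eq heq
    exact (hat p).mp ((bisim_atoms hbis p).mpr hp)

theorem main_lemma (k : ℕ) (M : PModel I P) (r : LinearOrder M.W) :
    ∀ h (x w : M.W), x ∈ maxRepr k M → h ≤ nbound k M x → Bisim M M h x w →
      ∀ S : (minContraction k M r).W, S.1 = reprClass k M x →
        Bisim M (minContraction k M r) h w S := by
  have := M.fin
  intro h
  induction h with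
  | zero =>
    intro x w hx hh hb S hS
    exact atoms_iff r hx hS hb
  | succ h IH =>
    intro x w hx hh hb S hS
    obtain ⟨n, hnd, hnk⟩ := exists_nat_depth hx.1
    have hnbx : nbound k M x = k - n := nbound_eq_of_depth hnd
    have hnlt : n + h + 1 ≤ k := by omega
    have hbxpos : 0 < bound k M x := by
      rw [bound_eq_of_depth hnd]
      exact_mod_cast (by omega : (0:ℤ) < (k:ℤ) - n)
    refine ⟨?_, ?_, ?_⟩
    · exact atoms_iff r hx hS (fun p => bisim_atoms hb p)
    · -- forth
      intro i w' hw'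
      obtain ⟨z, hxz, hbz⟩ := hb.2.2 i w' hw'
      -- depth facts for z
      have hdz : depth M z ≤ ((n+1 : ℕ) : ℕ∞) := depth_succ_le hnd hxz
      have hztop : depth M z ≠ ⊤ := ne_top_of_le_ne_top (ENat.coe_ne_top _) hdz
      obtain ⟨m, hm⟩ := WithTop.ne_top_iff_exists.mp hztop
      have hmn : m ≤ n + 1 := by
        rw [← hm] at hdz; exact_mod_cast Nat.cast_le.mp hdz
      have hz0 : 0 ≤ bound k M z := by
        rw [bound_eq_of_depth hm.symm]
        exact_mod_cast (by omega : (0:ℤ) ≤ (k:ℤ) - m)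
      have hnbz : nbound k M z = k - m := nbound_eq_of_depth hm.symm
      have hnbz_ge : nbound k M x - 1 ≤ nbound k M z := by omega
      -- nonempty finite set of representatives, take least
      obtain ⟨y', hy'max, hy'b, hy'bis⟩ := exists_maxRepr hz0
      set A : Set M.W := {v | v ∈ maxRepr k M ∧ Bisim M M (nbound k M x - 1) v z}
        with hA
      have hAfin : A.Finite := Set.toFinite A
      have hAne : A.Nonempty := ⟨y', hy'max, bisim_mono hnbz_ge hy'bis⟩
      letI := r
      obtain ⟨y₀, hy₀A, hy₀min⟩ := Set.exists_min_image A id hAfin hAne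
      refine ⟨⟨reprClass k M y₀, y₀, hy₀A.1, rfl⟩, ?_, ?_⟩
      · exact ⟨x, hx, z, hxz, hbxpos, hS, y₀, hy₀A.1,
          ⟨hy₀A.2, fun v hv hbv => hy₀min v ⟨hv, hbv⟩⟩, rfl⟩
      · -- apply IH
        have hb1 : Bisim M M h y₀ z := bisim_mono (by omega) hy₀A.2
        have hb2 : Bisim M M h y₀ w' := bisim_trans hb1 hbz
        have hny₀ : h ≤ nbound k M y₀ :=
          nbound_ge_claim hy₀A.1 hz0 (by omega) hb1
        exact IH y₀ w' hy₀A.1 hny₀ hb2 _ rfl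
    · -- back
      intro i T hT
      obtain ⟨x', hx', y, hxy, hbx'pos, hSx', y', hy'max, ⟨hbis_y', _⟩, hT1⟩ := hT
      have heq : reprClass k M x = reprClass k M x' := by rw [← hS, hSx']
      have hbxx' : Bisim M M (nbound k M x) x x' := bisim_of_reprClass_eq heq
      have hnxx' : nbound k M x ≤ nbound k M x' :=
        nbound_ge_claim hx' hx.1 le_rfl (bisim_symm hbxx')
      have hbx'w : Bisim M M (h+1) x' w :=
        bisim_trans (bisim_mono hh (bisim_symm hbxx')) hb
      obtain ⟨w', hww', hbyw'⟩ := hbx'w.2.1 i y hxy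
      -- depth facts for x' and y
      obtain ⟨n', hn'd, hn'k⟩ := exists_nat_depth hx'.1
      have hnbx' : nbound k M x' = k - n' := nbound_eq_of_depth hn'd
      have hn'lt : n' < k := by
        rw [bound_eq_of_depth hn'd] at hbx'pos
        have : (0:ℤ) < (k:ℤ) - n' := by exact_mod_cast hbx'pos
        omega
      have hdy : depth M y ≤ ((n'+1 : ℕ) : ℕ∞) := depth_succ_le hn'd hxy
      have hytop : depth M y ≠ ⊤ := ne_top_of_le_ne_top (ENat.coe_ne_top _) hdy
      obtain ⟨m', hm'⟩ := WithTop.ne_top_iff_exists.mp hytop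
      have hm'n : m' ≤ n' + 1 := by
        rw [← hm'] at hdy; exact_mod_cast Nat.cast_le.mp hdy
      have hy0 : 0 ≤ bound k M y := by
        rw [bound_eq_of_depth hm'.symm]
        exact_mod_cast (by omega : (0:ℤ) ≤ (k:ℤ) - m')
      have hnby : nbound k M y = k - m' := nbound_eq_of_depth hm'.symm
      have hx'h : h + 1 ≤ nbound k M x' := le_trans hh hnxx'
      have hb1 : Bisim M M h y' y := bisim_mono (by omega) hbis_y'
      have hb2 : Bisim M M h y' w' := bisim_trans hb1 hbyw'
      have hny' : nbound k M x' - 1 ≤ nbound k M y' :=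
        nbound_ge_claim hy'max hy0 (by omega) hbis_y'
      exact ⟨w', hww', IH y' w' hy'max (by omega) hb2 T hT1⟩

/-- The edge-minimal rooted `k`-contraction is `k`-bisimilar to the original model. -/
theorem minContraction_k_bisim (k : ℕ) (M : PModel I P) (r : LinearOrder M.W) :
    PBisim k M (minContraction k M r) := by
  have hnb : nbound k M M.d = k := by
    have h0 : depth M M.d = ((0 : ℕ) : ℕ∞) := by rw [depth_d M]; simp
    rw [nbound_eq_of_depth h0]; omega
  exact main_lemma k M r k M.d M.d (d_mem_maxRepr k M) (le_of_eq hnb.symm)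
    (bisim_refl M k M.d) _ rfl
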